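/- arXiv:1006.3209 — 3 statements merged into one kernel-verified Lean document; each statement's English description precedes it below -/
import Mathlib

section
/- For a Hirzebruch–Jung continued fraction expansion n/a = [b_1, ..., b_l] (with n > a ≥ 1, gcd(n,a) = 1, and each b_i ≥ 2), and a' the inverse of a modulo n with 1 ≤ a' ≤ n-1, the invariant B := (a + a')/n + (b_1 + ... + b_l) satisfies B ≥ 3. -/
/-- Value of a Hirzebruch–Jung continued fraction `[b₁,…,b_l]`,
i.e. `b₁ - 1/(b₂ - 1/(… ))`, using the junk value `0⁻¹ = 0` for the empty list. -/
def hjVal : List ℤ → ℚ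
  | [] => 0
  | b :: l => (b : ℚ) - (hjVal l)⁻¹

theorem stmt0 (n a a' : ℕ) (ha : 1 ≤ a) (han : a < n)
    (hcop : Nat.Coprime n a)
    (ha'1 : 1 ≤ a') (ha'2 : a' ≤ n - 1) (hinv : a * a' ≡ 1 [MOD n])
    (b : List ℤ) (hb : ∀ x ∈ b, 2 ≤ x)
    (hcf : hjVal b = (n : ℚ) / (a : ℚ)) :
    3 ≤ ((a : ℚ) + (a' : ℚ)) / (n : ℚ) + (b.sum : ℚ) := by
  have hn2 : 2 ≤ n := lt_of_le_of_lt ha han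
  have hnq : (0 : ℚ) < (n : ℚ) := by positivity
  have haq : (0 : ℚ) < (a : ℚ) := by exact_mod_cast ha
  match b, hb, hcf with
  | [], hb, hcf =>
    exfalso
    simp [hjVal] at hcf
    have : (n : ℚ) / (a : ℚ) ≠ 0 := div_ne_zero (by positivity) (by positivity)
    exact this hcf.symm
  | [b1], hb, hcf =>
    have hb1 : (2 : ℤ) ≤ b1 := hb b1 (by simp)
    simp [hjVal] at hcf
    -- n = b1 * a in ℤ
    have hzn : (n : ℤ) = b1 * a := by
      have : (b1 : ℚ) * (a : ℚ) = (n : ℚ) := by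
        field_simp at hcf; linarith [hcf]
      exact_mod_cast this.symm
    have hdvd : a ∣ n := by
      have : (a : ℤ) ∣ (n : ℤ) := ⟨b1, by linarith [hzn, mul_comm b1 (a:ℤ)]⟩
      exact_mod_cast this
    have ha1 : a = 1 := hcop.symm.eq_one_of_dvd hdvd
    subst ha1
    have hbn : (b1 : ℤ) = n := by simpa using hzn.symm
    have ha'eq : a' = 1 := by
      have h1 : a' % n = 1 % n := by
        have := hinv
        rwa [one_mul] at this
      have h2 : 1 % n = 1 := Nat.mod_eq_of_lt hn2
      have h3 : a' < n := lt_of_le_of_lt ha'2 (by omega)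
      have h4 : a' % n = a' := Nat.mod_eq_of_lt h3
      omega
    subst ha'eq
    simp only [List.sum_cons, List.sum_nil, add_zero]
    have hbq : (b1 : ℚ) = (n : ℚ) := by exact_mod_cast hbn
    rw [hbq]
    have hq2 : (2 : ℚ) ≤ (n : ℚ) := by exact_mod_cast hn2
    have key : ((1 : ℕ) : ℚ) + ((1 : ℕ) : ℚ) = 2 := by norm_num
    rw [key]
    rw [div_add' _ _ _ (ne_of_gt hnq), le_div_iff₀ hnq]
    nlinarith
  | b1 :: b2 :: rest, hb, hcf =>
    have hb1 : (2 : ℤ) ≤ b1 := hb b1 (by simp)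
    have hb2 : (2 : ℤ) ≤ b2 := hb b2 (by simp)
    have hrest : (0 : ℤ) ≤ rest.sum :=
      List.sum_nonneg (fun x hx => le_trans (by norm_num) (hb x (by simp [hx])))
    have hsum : (4 : ℤ) ≤ (b1 :: b2 :: rest).sum := by
      simp only [List.sum_cons]; linarith
    have hsq : (4 : ℚ) ≤ ((b1 :: b2 :: rest).sum : ℚ) := by exact_mod_cast hsum
    have hpos : (0 : ℚ) ≤ ((a : ℚ) + (a' : ℚ)) / (n : ℚ) := by positivity
    linarith
end

section
/- If n/a = [b_1, ..., b_l] is the Hirzebruch–Jung continued fraction expansion of n/a (with n > a ≥ 1 coprime, all b_i ≥ 2), then the reversed sequence [b_l, ..., b_1] is the Hirzebruch–Jung continued fraction expansion of n/a', where a' is the inverse of a modulo n with 1 ≤ a' ≤ n-1. -/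
/-- First column of the product of matrices `[[b,-1],[1,0]]`. -/
def hjPQ : List ℤ → ℤ × ℤ
  | [] => (1, 0)
  | b :: l => (b * (hjPQ l).1 - (hjPQ l).2, (hjPQ l).1)

/-- Second column of the product of matrices `[[b,-1],[1,0]]`. -/
def hjXY : List ℤ → ℤ × ℤ
  | [] => (0, 1)
  | b :: l => (b * (hjXY l).1 - (hjXY l).2, (hjXY l).1)

lemma hjXY_append (l : List ℤ) (b : ℤ) :
    hjXY (l ++ [b]) = (-(hjPQ l).1, -(hjPQ l).2) := by
  induction l with
  | nil => simp [hjXY, hjPQ]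
  | cons c l ih =>
      simp only [List.cons_append, List.append_eq, hjXY, hjPQ, ih, Prod.mk.injEq]
      exact ⟨by ring, trivial⟩

lemma hjPQ_append (l : List ℤ) (b : ℤ) :
    hjPQ (l ++ [b]) = (b * (hjPQ l).1 + (hjXY l).1, b * (hjPQ l).2 + (hjXY l).2) := by
  induction l with
  | nil => simp [hjXY, hjPQ]
  | cons c l ih =>
      simp only [List.cons_append, List.append_eq, hjPQ, hjXY, ih, Prod.mk.injEq]
      exact ⟨by ring, trivial⟩

lemma hj_reverse (l : List ℤ) :
    hjPQ l.reverse = ((hjPQ l).1, -(hjXY l).1) ∧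
      hjXY l.reverse = (-(hjPQ l).2, (hjXY l).2) := by
  induction l with
  | nil => simp [hjPQ, hjXY]
  | cons c l ih =>
      rw [List.reverse_cons]
      rw [hjPQ_append, hjXY_append, ih.1, ih.2]
      simp only [hjPQ, hjXY, Prod.mk.injEq]
      refine ⟨⟨by ring, by ring⟩, ⟨trivial, by ring⟩⟩

lemma hj_det (l : List ℤ) :
    (hjPQ l).1 * (hjXY l).2 - (hjXY l).1 * (hjPQ l).2 = 1 := by
  induction l with
  | nil => simp [hjPQ, hjXY]
  | cons c l ih =>
      simp only [hjPQ, hjXY]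
      nlinarith [ih]

lemma hj_pos (l : List ℤ) (hb : ∀ x ∈ l, 2 ≤ x) :
    0 ≤ (hjPQ l).2 ∧ (hjPQ l).2 < (hjPQ l).1 := by
  induction l with
  | nil => norm_num [hjPQ]
  | cons c l ih =>
      have hc : 2 ≤ c := hb c (by simp)
      have ih' := ih (fun x hx => hb x (by simp [hx]))
      simp only [hjPQ]
      constructor
      · linarith [ih'.1, ih'.2]
      · nlinarith [ih'.1, ih'.2]

lemma hj_val (l : List ℤ) (hb : ∀ x ∈ l, 2 ≤ x) :
    hjVal l = ((hjPQ l).1 : ℚ) / ((hjPQ l).2 : ℚ) := by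
  induction l with
  | nil => simp [hjVal, hjPQ]
  | cons c l ih =>
      have ih' := ih (fun x hx => hb x (by simp [hx]))
      have hpos := hj_pos l (fun x hx => hb x (by simp [hx]))
      have hP0 : ((hjPQ l).1 : ℚ) ≠ 0 := by
        have h : (hjPQ l).1 ≠ 0 := by omega
        exact_mod_cast h
      show (c:ℚ) - (hjVal l)⁻¹ = _
      rw [ih', inv_div]
      simp only [hjPQ]
      push_cast
      field_simp

theorem stmt1 (n a a' : ℕ) (ha : 1 ≤ a) (han : a < n)
    (hcop : Nat.Coprime n a)
    (ha'1 : 1 ≤ a') (ha'2 : a' ≤ n - 1) (hinv : a * a' ≡ 1 [MOD n])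
    (b : List ℤ) (hb : ∀ x ∈ b, 2 ≤ x)
    (hcf : hjVal b = (n : ℚ) / (a : ℚ)) :
    hjVal b.reverse = (n : ℚ) / (a' : ℚ) := by
  have hn2 : 2 ≤ n := by omega
  -- b is nonempty
  have hbne : b ≠ [] := by
    intro h
    rw [h] at hcf
    simp [hjVal] at hcf
    have : (0:ℚ) < (n : ℚ) / (a : ℚ) := by
      apply div_pos <;> exact_mod_cast (by omega : (0:ℕ) < _)
    rw [← hcf] at this
    exact lt_irrefl _ this
  obtain ⟨P, Q, hPQ⟩ : ∃ p q, hjPQ b = (p, q) := ⟨_, _, rfl⟩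
  obtain ⟨X, Y, hXY⟩ : ∃ x y, hjXY b = (x, y) := ⟨_, _, rfl⟩
  have hval := hj_val b hb
  have hpos := hj_pos b hb
  have hdet := hj_det b
  -- Q ≥ 1 since b nonempty
  have hQ1 : 1 ≤ Q := by
    obtain ⟨c, l, rfl⟩ := List.exists_cons_of_ne_nil hbne
    have h := hj_pos l (fun x hx => hb x (by simp [hx]))
    have : (hjPQ (c :: l)).2 = (hjPQ l).1 := rfl
    rw [hPQ] at this
    simp at this
    omega
  have hP1 : 1 ≤ P := by
    have := hpos
    simp [hPQ] at this
    omega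
  have hposP : 0 ≤ Q ∧ Q < P := by simpa [hPQ] using hpos
  have hdet' : P * Y - X * Q = 1 := by simpa [hPQ, hXY] using hdet
  have hval' : hjVal b = (P : ℚ) / (Q : ℚ) := by simpa [hPQ] using hval
  -- cross multiplication: P * a = n * Q
  have hcross : P * (a : ℤ) = (n : ℤ) * Q := by
    have hQ0 : ((Q : ℤ) : ℚ) ≠ 0 := by exact_mod_cast (by omega : Q ≠ 0)
    have ha0 : ((a : ℕ) : ℚ) ≠ 0 := by exact_mod_cast (by omega : a ≠ 0)
    have h1 : (P : ℚ) / (Q : ℚ) = (n : ℚ) / (a : ℚ) := by rw [← hval', hcf]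
    have h2 := (div_eq_div_iff hQ0 ha0).mp h1
    exact_mod_cast h2
  -- coprimality
  have hcopPQ : IsCoprime P Q := ⟨Y, -X, by linarith⟩
  have hcopna : IsCoprime (n : ℤ) (a : ℤ) := Int.isCoprime_iff_gcd_eq_one.mpr (by
    simpa [Int.gcd_natCast_natCast] using hcop)
  have hPn : P ∣ (n : ℤ) := hcopPQ.dvd_of_dvd_mul_right ⟨(a:ℤ), by linarith⟩
  have hnP : (n : ℤ) ∣ P := hcopna.dvd_of_dvd_mul_right ⟨Q, by linarith⟩
  have hPeqn : P = (n : ℤ) := Int.dvd_antisymm (by omega) (by positivity) hPn hnP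
  have hQeqa : Q = (a : ℤ) := by
    have h := hcross
    rw [hPeqn] at h
    have hn0 : (n : ℤ) ≠ 0 := by exact_mod_cast (by omega : n ≠ 0)
    exact (mul_left_cancel₀ hn0 h).symm
  -- reversed list
  have hrev := hj_reverse b
  rw [hPQ, hXY] at hrev
  have hbrev : ∀ x ∈ b.reverse, 2 ≤ x := fun x hx => hb x (List.mem_reverse.mp hx)
  have hvalrev := hj_val b.reverse hbrev
  have hposrev := hj_pos b.reverse hbrev
  rw [hrev.1] at hvalrev hposrev
  simp only at hvalrev hposrev
  -- bounds on c := -X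
  have hclt : -X < (n : ℤ) := by
    have := hposrev.2
    rw [hPeqn] at this
    exact this
  have hc1 : 1 ≤ -X := by
    have hrevne : b.reverse ≠ [] := by simpa using hbne
    obtain ⟨d, l, hdl⟩ := List.exists_cons_of_ne_nil hrevne
    have hl2 : ∀ x ∈ l, 2 ≤ x := fun x hx => hbrev x (by simp [hdl, hx])
    have h := hj_pos l hl2
    have h2 : (hjPQ b.reverse).2 = (hjPQ l).1 := by rw [hdl]; rfl
    rw [hrev.1] at h2
    simp at h2
    omega
  -- a * (-X) ≡ 1 mod n
  have hac : (n : ℤ) ∣ (a : ℤ) * (-X) - 1 := by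
    refine ⟨-Y, ?_⟩
    have h : P * Y - X * Q = 1 := hdet'
    rw [hPeqn, hQeqa] at h
    linear_combination h
  -- a * a' ≡ 1 mod n
  have haa' : (n : ℤ) ∣ (a : ℤ) * (a' : ℤ) - 1 := by
    obtain ⟨k, hk⟩ := Nat.modEq_iff_dvd.mp hinv
    refine ⟨-k, ?_⟩
    push_cast at hk ⊢
    linarith
  -- n ∣ a * (-X - a')
  have hdvd : (n : ℤ) ∣ (a : ℤ) * (-X - (a' : ℤ)) := by
    have h : (a : ℤ) * (-X - (a' : ℤ)) = ((a : ℤ) * (-X) - 1) - ((a : ℤ) * (a' : ℤ) - 1) := by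
      ring
    rw [h]
    exact dvd_sub hac haa'
  have hdvd' : (n : ℤ) ∣ -X - (a' : ℤ) := hcopna.dvd_of_dvd_mul_left hdvd
  have ha'n : (a' : ℤ) ≤ (n : ℤ) - 1 := by
    have h : (a' : ℕ) ≤ n - 1 := ha'2
    omega
  have ha'1' : 1 ≤ (a' : ℤ) := by exact_mod_cast ha'1
  have hceq : -X = (a' : ℤ) := by
    have habs : |(-X) - (a' : ℤ)| < (n : ℤ) := abs_lt.mpr ⟨by linarith, by linarith⟩
    have h0 := Int.eq_zero_of_abs_lt_dvd hdvd' habs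
    linarith
  rw [hvalrev, hPeqn, hceq]
  push_cast
  ring
end

section
/- Let k(1/n(1,a)) := -2 + (2 + a + a')/n + Σ_{i=1}^{l}(b_i - 2), where n/a = [b_1,...,b_l] is the Hirzebruch–Jung continued fraction and a' is the inverse of a mod n with 1 ≤ a' ≤ n-1. Then k(1/n(1,a)) ≥ 0. -/
lemma hjVal_gt_one : ∀ (b : List ℤ), (∀ x ∈ b, 2 ≤ x) → b ≠ [] → 1 < hjVal b
  | [], _, h => absurd rfl h
  | x :: l, hb, _ => by
    have hx : 2 ≤ x := hb x List.mem_cons_self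
    have hx' : (2 : ℚ) ≤ (x : ℚ) := by exact_mod_cast hx
    rcases eq_or_ne l [] with rfl | hl
    · show 1 < (x : ℚ) - (hjVal [])⁻¹
      simp [hjVal]; linarith
    · have h1 : 1 < hjVal l := hjVal_gt_one l (fun y hy => hb y (List.mem_cons_of_mem _ hy)) hl
      have h2 : (hjVal l)⁻¹ < 1 := by
        rw [inv_lt_one_iff₀]; right; exact h1
      show 1 < (x : ℚ) - (hjVal l)⁻¹
      linarith

lemma key : ∀ (b : List ℤ), (∀ x ∈ b, 2 ≤ x) → b ≠ [] →
    ∃ a' : ℤ, 1 ≤ a' ∧ a' ≤ (hjVal b).num - 1 ∧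
      (hjVal b).num ∣ ((hjVal b).den : ℤ) * a' - 1 ∧
      2 * (hjVal b).num ≤ (hjVal b).num * ((b.map (fun x => x - 2)).sum)
        + ((hjVal b).den : ℤ) + a' + 2
  | [], _, h => absurd rfl h
  | x :: l, hb, _ => by
    have hx : 2 ≤ x := hb x List.mem_cons_self
    rcases eq_or_ne l [] with rfl | hl
    · have hval : hjVal [x] = (x : ℚ) := by simp [hjVal]
      have hnum : (hjVal [x]).num = x := by rw [hval, Rat.num_intCast]
      have hden : ((hjVal [x]).den : ℤ) = 1 := by rw [hval, Rat.den_intCast]; rfl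
      rw [hnum, hden]
      refine ⟨1, le_refl _, by omega, by simp, ?_⟩
      simp only [List.map_cons, List.map_nil, List.sum_cons, List.sum_nil, add_zero]
      nlinarith [sq_nonneg (x - 2)]
    · have hbl : ∀ y ∈ l, 2 ≤ y := fun y hy => hb y (List.mem_cons_of_mem _ hy)
      have hq1 : 1 < hjVal l := hjVal_gt_one l hbl hl
      obtain ⟨c', hc'1, hc'2, ⟨k, hk⟩, hIH⟩ := key l hbl hl
      set q := hjVal l with hqdef
      set A : ℤ := q.num with hA
      set C : ℤ := (q.den : ℤ) with hC
      have hC1 : 1 ≤ C := by rw [hC]; exact_mod_cast q.den_pos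
      have hCA : C < A := by
        have hd0 : (0:ℚ) < ((q.den:ℚ)) := by exact_mod_cast q.den_pos
        have hlt : ((q.den:ℚ)) < ((q.num:ℚ)) := by
          calc ((q.den:ℚ)) = 1 * (q.den:ℚ) := (one_mul _).symm
          _ < q * (q.den:ℚ) := by exact mul_lt_mul_of_pos_right hq1 hd0
          _ = (q.num:ℚ) := Rat.mul_den_eq_num q
        rw [hA, hC]
        exact_mod_cast hlt
      have hA1 : 1 ≤ A := by omega
      have hcop : IsCoprime A C := by
        rw [Int.isCoprime_iff_gcd_eq_one]
        exact q.reduced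
      have hq0 : q ≠ 0 := by positivity
      have hAq : (A : ℚ) ≠ 0 := by
        have : (0:ℤ) < A := by omega
        positivity
      have hnum0 : ((q.num:ℚ)) ≠ 0 := by
        rw [← hA]
        exact_mod_cast (by omega : A ≠ 0)
      have hden0 : ((q.den:ℚ)) ≠ 0 := by exact_mod_cast q.den_pos.ne'
      have hval : hjVal (x :: l) = ((x * A - C : ℤ) : ℚ) / ((A : ℤ) : ℚ) := by
        show (x : ℚ) - q⁻¹ = _
        have hqinv : q⁻¹ = ((q.den:ℚ))/((q.num:ℚ)) := by
          conv_lhs => rw [← Rat.num_div_den q]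
          rw [inv_div]
        rw [hqinv]
        push_cast
        rw [hA, hC]
        push_cast
        field_simp
      have hcop2 : Nat.Coprime (x * A - C).natAbs A.natAbs := by
        have h1 : IsCoprime (-C) A := (hcop.symm).neg_left
        have h2 : IsCoprime (-C + A * x) A := h1.add_mul_left_left x
        have h3 : IsCoprime (x * A - C) A := by
          have : x * A - C = -C + A * x := by ring
          rwa [this]
        rwa [Int.isCoprime_iff_gcd_eq_one] at h3
      have hA0 : (0:ℤ) < A := by omega
      have hnum : (hjVal (x :: l)).num = x * A - C := by
        rw [hval]; exact Rat.num_div_eq_of_coprime hA0 hcop2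
      have hden : ((hjVal (x :: l)).den : ℤ) = A := by
        rw [hval]; exact Rat.den_div_eq_of_coprime hA0 hcop2
      rw [hnum, hden]
      set N : ℤ := x * A - C with hN
      have hAN : A < N := by
        have h7 : 0 ≤ (x - 2) * A := mul_nonneg (by omega) (by omega)
        rw [hN]; linarith
      have hN0 : (0:ℤ) < N := by omega
      have hid : A * (x * c' - k) = c' * N + 1 := by
        rw [hN]; linear_combination hk
      have hcN : (0:ℤ) < c' * N := mul_pos (by omega) hN0
      refine ⟨x * c' - k, ?_, ?_, ?_, ?_⟩
      · by_contra hcon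
        push_neg at hcon
        have h8 : A * (x * c' - k) ≤ 0 :=
          mul_nonpos_of_nonneg_of_nonpos hA0.le (by omega)
        linarith [h8, hid, hcN]
      · have h5 : c' * N ≤ (A - 1) * N := mul_le_mul_of_nonneg_right (by omega) hN0.le
        have h6 : A * (x * c' - k) ≤ A * (N - 1) := by nlinarith [h5, hid, hAN]
        exact le_of_mul_le_mul_left h6 hA0
      · exact ⟨c', by linear_combination hk⟩
      · simp only [List.map_cons, List.sum_cons]
        set S : ℤ := (l.map (fun x => x - 2)).sum with hS
        refine le_of_mul_le_mul_left ?_ hA0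
        have hmul : N * (2*A - C - c' - 2) ≤ N * (A * S) :=
          mul_le_mul_of_nonneg_left (by linarith [hIH]) hN0.le
        have hNx : N * (A * (x - 2)) = N*N + N*C - 2*(N*A) := by
          rw [hN]; ring
        have hsq : 0 ≤ N*N - 2*(N*A) - 2*N + A*A + 2*A + 1 := by
          nlinarith [sq_nonneg (N - A - 1)]
        nlinarith [hmul, hNx, hsq, hid]

theorem stmt2 (n a a' : ℕ) (ha : 1 ≤ a) (han : a < n)
    (hcop : Nat.Coprime n a)
    (ha'1 : 1 ≤ a') (ha'2 : a' ≤ n - 1) (hinv : a * a' ≡ 1 [MOD n])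
    (b : List ℤ) (hb : ∀ x ∈ b, 2 ≤ x)
    (hcf : hjVal b = (n : ℚ) / (a : ℚ)) :
    0 ≤ -2 + (2 + (a : ℚ) + (a' : ℚ)) / (n : ℚ)
        + (((b.map (fun x => x - 2)).sum : ℤ) : ℚ) := by
  have hn1 : 1 ≤ n := by omega
  have hposQ : (0:ℚ) < (n : ℚ) / (a : ℚ) := by
    apply div_pos
    · exact_mod_cast (by omega : 0 < n)
    · exact_mod_cast ha
  have hbne : b ≠ [] := by
    intro h
    rw [h] at hcf
    have h0 : hjVal ([] : List ℤ) = 0 := by simp [hjVal]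
    rw [h0] at hcf
    rw [← hcf] at hposQ
    exact lt_irrefl _ hposQ
  have hcop2 : Nat.Coprime ((n:ℤ)).natAbs ((a:ℤ)).natAbs := by simpa using hcop
  have ha0 : (0:ℤ) < (a:ℤ) := by exact_mod_cast ha
  have hnum : (hjVal b).num = (n : ℤ) := by
    rw [hcf]
    have := Rat.num_div_eq_of_coprime ha0 hcop2
    push_cast at this ⊢
    exact this
  have hden : ((hjVal b).den : ℤ) = (a : ℤ) := by
    rw [hcf]
    have := Rat.den_div_eq_of_coprime ha0 hcop2
    push_cast at this ⊢
    exact this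
  obtain ⟨a'', h1, h2, h3, h4⟩ := key b hb hbne
  rw [hnum] at h2 h3 h4
  rw [hden] at h3 h4
  have h1le : 1 ≤ a * a' := Nat.one_le_iff_ne_zero.mpr (by positivity)
  have hd : n ∣ a * a' - 1 := (Nat.modEq_iff_dvd' h1le).mp hinv.symm
  zify [h1le] at hd
  have hdvd : (n:ℤ) ∣ (a:ℤ) * (a'' - (a':ℤ)) := by
    have := dvd_sub h3 hd
    have he : (a:ℤ) * a'' - 1 - ((a:ℤ) * (a':ℤ) - 1) = (a:ℤ) * (a'' - (a':ℤ)) := by ring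
    rwa [he] at this
  have hcopZ : IsCoprime ((n:ℤ)) ((a:ℤ)) := by
    rw [Int.isCoprime_iff_gcd_eq_one]
    simpa using hcop
  have hdvd' : (n:ℤ) ∣ (a'' - (a':ℤ)) := hcopZ.dvd_of_dvd_mul_left hdvd
  have ha'z : (a':ℤ) ≤ (n:ℤ) - 1 := by omega
  have ha'z1 : 1 ≤ (a':ℤ) := by exact_mod_cast ha'1
  have heq : a'' = (a':ℤ) := by
    have habs : |a'' - (a':ℤ)| < (n:ℤ) := abs_lt.mpr ⟨by omega, by omega⟩
    have := Int.eq_zero_of_abs_lt_dvd hdvd' habs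
    omega
  rw [heq] at h4
  set S : ℤ := (b.map (fun x => x - 2)).sum with hS
  have hnQ : (0:ℚ) < (n:ℚ) := by exact_mod_cast (by omega : 0 < n)
  have h4Q : 2 * (n:ℚ) ≤ (n:ℚ) * (S:ℚ) + (a:ℚ) + (a':ℚ) + 2 := by exact_mod_cast h4
  have hrw : -2 + (2 + (a:ℚ) + (a':ℚ)) / (n:ℚ) + (S:ℚ)
      = ((n:ℚ) * (S:ℚ) + (a:ℚ) + (a':ℚ) + 2 - 2 * (n:ℚ)) / (n:ℚ) := by
    field_simp
    ring
  rw [hrw]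
  exact div_nonneg (by linarith) hnQ.le
end
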